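/- arXiv:1503.01488 — 5 statements merged into one kernel-verified Lean document; each statement's English description precedes it below -/
import Mathlib

section
/- Every ld-envyfree random assignment is weakly sd-envyfree, and the inclusion is strict: there exists a weakly sd-envyfree assignment that is not ld-envyfree. -/
open Finset

/-- Upper cumulative probability `w(≻, ℓ, A)`. -/
noncomputable def wCum {M : Type*} [Fintype M] (pref : M → M → Prop) (A : M → ℝ) (ℓ : M) : ℝ :=
  open scoped Classical in
  ∑ j ∈ Finset.univ.filter (fun j => pref j ℓ ∨ j = ℓ), A j

/-- An assignment is ld-envyfree if no agent ld-prefers another agent's allocation. -/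
def LdEnvyFree {N M : Type*} (pref : N → M → M → Prop) (A : N → M → ℝ) : Prop :=
  ¬ ∃ (i k : N) (ℓ : M), A k ℓ > A i ℓ ∧ ∀ j, pref i j ℓ → A i j = A k j

/-- An assignment is weakly sd-envyfree if no agent's allocation is weakly sd-dominated by
another agent's allocation (whenever they differ, the owner strictly prefers hers somewhere). -/
def WeakSdEnvyFree {N M : Type*} [Fintype M] (pref : N → M → M → Prop) (A : N → M → ℝ) : Prop :=
  ∀ i k : N, A i ≠ A k → ∃ ℓ : M, wCum (pref i) (A i) ℓ > wCum (pref i) (A k) ℓ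

/-- every ld-envyfree assignment is weakly sd-envyfree, and the inclusion is
strict: some weakly sd-envyfree assignment is not ld-envyfree. -/
theorem ldEnvyfree_subset_weakSdEnvyfree_strict :
    (∀ (N M : Type) [Fintype N] [Fintype M] (pref : N → M → M → Prop)
      (_ : ∀ i, IsStrictTotalOrder M (pref i)) (A : N → M → ℝ)
      (_ : ∀ i j, 0 ≤ A i j) (_ : ∀ i, ∑ j, A i j = 1),
      LdEnvyFree pref A → WeakSdEnvyFree pref A)
    ∧ (∃ (pref : Fin 2 → Fin 3 → Fin 3 → Prop) (A : Fin 2 → Fin 3 → ℝ),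
        (∀ i, IsStrictTotalOrder (Fin 3) (pref i)) ∧ (∀ i j, 0 ≤ A i j) ∧
        (∀ i, ∑ j, A i j = 1) ∧
        WeakSdEnvyFree pref A ∧ ¬ LdEnvyFree pref A) := by
  constructor
  · intro N M _ _ pref horder A _ _ hld i k hik
    classical
    haveI : IsTrans M (pref i) := (horder i).toIsTrans
    haveI : IsIrrefl M (pref i) := (horder i).toIsStrictOrder.toIrrefl
    have hwf : WellFounded (pref i) := Finite.wellFounded_of_trans_of_irrefl _
    have hS : {j : M | A i j ≠ A k j}.Nonempty := by
      by_contra h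
      apply hik
      funext j
      by_contra hj
      exact h ⟨j, hj⟩
    obtain ⟨m, hm, hmin⟩ := hwf.has_min _ hS
    have habove : ∀ j, pref i j m → A i j = A k j := by
      intro j hj
      by_contra hne
      exact hmin j hne hj
    have hgt : A i m > A k m := by
      rcases lt_trichotomy (A i m) (A k m) with h | h | h
      · exact absurd ⟨i, k, m, h, habove⟩ hld
      · exact absurd h hm
      · exact h
    refine ⟨m, ?_⟩
    unfold wCum
    apply Finset.sum_lt_sum
    · intro j hj
      simp only [Finset.mem_filter] at hj
      rcases hj.2 with h | h
      · exact (habove j h).ge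
      · subst h; exact hgt.le
    · exact ⟨m, by simp, hgt⟩
  · refine ⟨fun _ j l => j < l, ![![1/6, 5/6, 0], ![4/6, 1/6, 1/6]], fun _ => inferInstance,
      ?_, ?_, ?_, ?_⟩
    · intro i j; fin_cases i <;> fin_cases j <;> norm_num
    · intro i; fin_cases i <;> simp [Fin.sum_univ_three] <;> norm_num
    · intro i k h
      fin_cases i <;> fin_cases k
      · exact absurd rfl h
      · refine ⟨1, ?_⟩
        simp only [wCum, Finset.sum_filter, Fin.sum_univ_three]
        norm_num [Fin.lt_def, Fin.ext_iff]
      · refine ⟨0, ?_⟩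
        simp only [wCum, Finset.sum_filter, Fin.sum_univ_three]
        norm_num [Fin.lt_def, Fin.ext_iff]
      · exact absurd rfl h
    · intro h
      apply h
      refine ⟨0, 1, 0, by norm_num, ?_⟩
      intro j hj
      exact absurd hj (by simp [Fin.lt_def])
end

section
/- With two agents having identical preferences a ≻ b ≻ c over three objects, the assignment A_1 = (1/6, 5/6, 0) and A_2 = (4/6, 1/6, 1/6) is weakly sd-envyfree but not ld-envyfree. -/
open Finset

/-- The assignment of Statement 3: `A 0 = (1/6, 5/6, 0)`, `A 1 = (4/6, 1/6, 1/6)`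
over objects `(a, b, c) = (0, 1, 2)`. -/
noncomputable def A3 : Fin 2 → Fin 3 → ℝ := ![![1/6, 5/6, 0], ![4/6, 1/6, 1/6]]

/-- Both agents have preference `a ≻ b ≻ c`, i.e. object `j` is preferred to `ℓ` iff `j < ℓ`. -/
def pref3 (j ℓ : Fin 3) : Prop := j < ℓ

instance : DecidableRel pref3 := fun j ℓ => by unfold pref3; infer_instance

/-- with both agents preferring a ≻ b ≻ c, the assignment
`A_1 = (1/6, 5/6, 0)`, `A_2 = (4/6, 1/6, 1/6)` is weakly sd-envyfree but not ld-envyfree. -/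
theorem weakSd_not_ld :
    (∀ i k : Fin 2, A3 i ≠ A3 k →
      ∃ ℓ : Fin 3,
        ∑ j ∈ Finset.univ.filter (fun j => pref3 j ℓ ∨ j = ℓ), A3 i j >
        ∑ j ∈ Finset.univ.filter (fun j => pref3 j ℓ ∨ j = ℓ), A3 k j)
    ∧ (∃ (i k : Fin 2) (ℓ : Fin 3), A3 k ℓ > A3 i ℓ ∧ ∀ j, pref3 j ℓ → A3 i j = A3 k j) := by
  constructor
  · intro i k hik
    fin_cases i <;> fin_cases k
    · exact absurd rfl hik
    · exact ⟨1, by norm_num [A3, pref3, Finset.sum_filter, Fin.sum_univ_succ, Fin.lt_def, show (2 : Fin 3) ≠ 1 by decide]⟩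
    · exact ⟨0, by norm_num [A3, pref3, Finset.sum_filter, Fin.sum_univ_succ, Fin.lt_def]⟩
    · exact absurd rfl hik
  · refine ⟨0, 1, 0, by norm_num [A3], fun j hj => absurd hj (by
      simp [pref3, Fin.lt_def] at *)⟩
end

section
/- The random serial dictatorship mechanism with n = m agents and objects is ld-envyfree: no agent's RSD allocation is lexicographically dominated (from her own preference perspective) by another agent's allocation. -/
open Finset

/-- The set of objects still available after the first `k` agents in the priority ordering
`σ` have picked. Preferences are rank permutations: `p i j` is the rank agent `i`
assigns to object `j` (lower rank = more preferred). -/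
def availAux (n : ℕ) (p : Fin n → Equiv.Perm (Fin n)) (σ : Equiv.Perm (Fin n)) :
    ℕ → Finset (Fin n)
  | 0 => Finset.univ
  | k + 1 =>
    if h : k < n then
      let S := availAux n p σ k
      let a := σ ⟨k, h⟩
      if hS : S.Nonempty then
        S.erase ((p a).symm ((S.image (p a)).min' (hS.image _)))
      else S
    else availAux n p σ k

def fav (n : ℕ) (p : Fin n → Equiv.Perm (Fin n)) (a : Fin n) (S : Finset (Fin n))
    (hS : S.Nonempty) : Fin n :=
  (p a).symm ((S.image (p a)).min' (hS.image _))

lemma availAux_succ_def (n : ℕ) (p : Fin n → Equiv.Perm (Fin n)) (σ : Equiv.Perm (Fin n))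
    (t : ℕ) : availAux n p σ (t+1) =
      if h : t < n then
        (if hS : (availAux n p σ t).Nonempty then
          (availAux n p σ t).erase (fav n p (σ ⟨t, h⟩) _ hS)
        else availAux n p σ t)
      else availAux n p σ t := rfl

lemma fav_mem (n : ℕ) (p : Fin n → Equiv.Perm (Fin n)) (a : Fin n) (S : Finset (Fin n))
    (hS : S.Nonempty) : fav n p a S hS ∈ S := by
  obtain ⟨x, hx, hx2⟩ := Finset.mem_image.mp ((S.image (p a)).min'_mem (hS.image _))
  rw [fav, ← hx2, Equiv.symm_apply_apply]; exact hx

lemma fav_min (n : ℕ) (p : Fin n → Equiv.Perm (Fin n)) (a x : Fin n) (S : Finset (Fin n))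
    (hS : S.Nonempty) (hx : x ∈ S) : p a (fav n p a S hS) ≤ p a x := by
  rw [fav, Equiv.apply_symm_apply]
  exact Finset.min'_le _ _ (Finset.mem_image_of_mem _ hx)

lemma fav_lt (n : ℕ) (p : Fin n → Equiv.Perm (Fin n)) (a x : Fin n) (S : Finset (Fin n))
    (hS : S.Nonempty) (hx : x ∈ S) (hne : x ≠ fav n p a S hS) :
    p a (fav n p a S hS) < p a x :=
  lt_of_le_of_ne (fav_min n p a x S hS hx) (fun h => hne ((p a).injective h.symm))

lemma availAux_card (n : ℕ) (p : Fin n → Equiv.Perm (Fin n)) (σ : Equiv.Perm (Fin n)) :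
    ∀ t, t ≤ n → (availAux n p σ t).card = n - t
  | 0, _ => by simp [availAux]
  | t+1, ht => by
    have h : t < n := ht
    have ih := availAux_card n p σ t h.le
    have hS : (availAux n p σ t).Nonempty :=
      Finset.card_pos.mp (by rw [ih]; omega)
    rw [availAux_succ_def, dif_pos h, dif_pos hS,
      Finset.card_erase_of_mem (fav_mem n p _ _ hS), ih]
    omega

lemma availAux_nonempty (n : ℕ) (p : Fin n → Equiv.Perm (Fin n)) (σ : Equiv.Perm (Fin n))
    {t : ℕ} (ht : t < n) : (availAux n p σ t).Nonempty :=
  Finset.card_pos.mp (by rw [availAux_card n p σ t ht.le]; omega)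

lemma availAux_succ_subset (n : ℕ) (p : Fin n → Equiv.Perm (Fin n)) (σ : Equiv.Perm (Fin n))
    (t : ℕ) : availAux n p σ (t+1) ⊆ availAux n p σ t := by
  rw [availAux_succ_def]
  split_ifs with h hS
  · exact Finset.erase_subset _ _
  · exact subset_rfl
  · exact subset_rfl

lemma availAux_subset (n : ℕ) (p : Fin n → Equiv.Perm (Fin n)) (σ : Equiv.Perm (Fin n))
    {s t : ℕ} (h : s ≤ t) : availAux n p σ t ⊆ availAux n p σ s := by
  induction t, h using Nat.le_induction with
  | base => exact subset_rfl
  | succ t ht ih => exact (availAux_succ_subset n p σ t).trans ih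

lemma availAux_congr_from (n : ℕ) (p : Fin n → Equiv.Perm (Fin n))
    (σ σ' : Equiv.Perm (Fin n)) {t0 : ℕ}
    (h0 : availAux n p σ t0 = availAux n p σ' t0) :
    ∀ t, t0 ≤ t → (∀ s (hs : s < n), t0 ≤ s → s < t → σ ⟨s, hs⟩ = σ' ⟨s, hs⟩) →
      availAux n p σ t = availAux n p σ' t := by
  intro t ht
  induction t, ht using Nat.le_induction with
  | base => exact fun _ => h0
  | succ t ht ih =>
    intro hag
    have ih' := ih (fun s hs h1 h2 => hag s hs h1 (h2.trans (Nat.lt_succ_self t)))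
    rw [availAux_succ_def, availAux_succ_def]
    by_cases h : t < n
    · rw [dif_pos h, dif_pos h, ih', hag t h ht (Nat.lt_succ_self t)]
    · rw [dif_neg h, dif_neg h, ih']

lemma availAux_congr (n : ℕ) (p : Fin n → Equiv.Perm (Fin n))
    (σ σ' : Equiv.Perm (Fin n)) (t : ℕ)
    (h : ∀ s (hs : s < n), s < t → σ ⟨s, hs⟩ = σ' ⟨s, hs⟩) :
    availAux n p σ t = availAux n p σ' t :=
  availAux_congr_from n p σ σ' (t0 := 0) rfl t (Nat.zero_le t)
    (fun s hs _ h2 => h s hs h2)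

/-- The object agent `i` picks under serial dictatorship with priority ordering `σ`:
her most preferred object among those still available when her turn (position `σ⁻¹ i`)
comes. -/
def sdPick (n : ℕ) (p : Fin n → Equiv.Perm (Fin n)) (σ : Equiv.Perm (Fin n)) (i : Fin n) :
    Fin n :=
  let S := availAux n p σ (σ.symm i).val
  if hS : S.Nonempty then (p i).symm ((S.image (p i)).min' (hS.image _)) else i

/-- The random serial dictatorship assignment: the probability that agent `i` receives
object `j`, averaging serial dictatorship over all `n!` priority orderings uniformly. -/
def rsd (n : ℕ) (p : Fin n → Equiv.Perm (Fin n)) (i j : Fin n) : ℚ :=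
  (∑ σ : Equiv.Perm (Fin n), if sdPick n p σ i = j then 1 else 0) / (Nat.factorial n)

lemma sdPick_def (n : ℕ) (p : Fin n → Equiv.Perm (Fin n)) (σ : Equiv.Perm (Fin n))
    (a : Fin n) : sdPick n p σ a =
      fav n p a (availAux n p σ (σ.symm a).val) (availAux_nonempty n p σ (σ.symm a).isLt) := by
  rw [sdPick, dif_pos (availAux_nonempty n p σ (σ.symm a).isLt)]; rfl

lemma sdPick_mem (n : ℕ) (p : Fin n → Equiv.Perm (Fin n)) (σ : Equiv.Perm (Fin n))
    (a : Fin n) : sdPick n p σ a ∈ availAux n p σ (σ.symm a).val := by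
  rw [sdPick_def]; exact fav_mem _ _ _ _ _

lemma sdPick_min (n : ℕ) (p : Fin n → Equiv.Perm (Fin n)) (σ : Equiv.Perm (Fin n))
    (a x : Fin n) (hx : x ∈ availAux n p σ (σ.symm a).val) :
    p a (sdPick n p σ a) ≤ p a x := by
  rw [sdPick_def]; exact fav_min _ _ _ _ _ _ hx

lemma sdPick_lt (n : ℕ) (p : Fin n → Equiv.Perm (Fin n)) (σ : Equiv.Perm (Fin n))
    (a x : Fin n) (hx : x ∈ availAux n p σ (σ.symm a).val) (hne : x ≠ sdPick n p σ a) :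
    p a (sdPick n p σ a) < p a x := by
  rw [sdPick_def] at hne ⊢; exact fav_lt _ _ _ _ _ _ hx hne

lemma availAux_erase_pick (n : ℕ) (p : Fin n → Equiv.Perm (Fin n)) (σ : Equiv.Perm (Fin n))
    (a : Fin n) : availAux n p σ ((σ.symm a).val + 1) =
      (availAux n p σ (σ.symm a).val).erase (sdPick n p σ a) := by
  have h : (σ.symm a).val < n := (σ.symm a).isLt
  have hag : σ ⟨(σ.symm a).val, h⟩ = a := by
    rw [Fin.eta, Equiv.apply_symm_apply]
  rw [availAux_succ_def, dif_pos h, dif_pos (availAux_nonempty n p σ h), sdPick_def]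
  congr 1
  simp only [fav, hag]

lemma key_pair (n : ℕ) (p : Fin n → Equiv.Perm (Fin n)) (M : ℕ) (hM : 2 ≤ M)
    (i k : Fin n) (σ : Equiv.Perm (Fin n))
    (hq : (σ.symm i).val < (σ.symm k).val) :
    M ^ (n - 1 - (p i (sdPick n p σ k)).val) +
      M ^ (n - 1 - (p i (sdPick n p (Equiv.swap i k * σ) k)).val) ≤
    M ^ (n - 1 - (p i (sdPick n p σ i)).val) +
      M ^ (n - 1 - (p i (sdPick n p (Equiv.swap i k * σ) i)).val) := by
  set τ := Equiv.swap i k * σ with hτ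
  have hτ_apply : ∀ x, τ x = Equiv.swap i k (σ x) := fun x => rfl
  have hτsymm_k : τ.symm k = σ.symm i := by
    have h1 : τ (σ.symm i) = k := by
      rw [hτ_apply, Equiv.apply_symm_apply, Equiv.swap_apply_left]
    rw [← h1, Equiv.symm_apply_apply]
  have hτsymm_i : τ.symm i = σ.symm k := by
    have h1 : τ (σ.symm k) = i := by
      rw [hτ_apply, Equiv.apply_symm_apply, Equiv.swap_apply_right]
    rw [← h1, Equiv.symm_apply_apply]
  set q := (σ.symm i).val with hqdef
  set qk := (σ.symm k).val with hqkdef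
  -- agents before position qk (other than position q) are fixed by the swap
  have hagents : ∀ s (hs : s < n), s ≠ q → s < qk → σ ⟨s, hs⟩ = τ ⟨s, hs⟩ := by
    intro s hs hsq hsqk
    have h1 : σ ⟨s, hs⟩ ≠ i := by
      intro h
      have : σ.symm i = ⟨s, hs⟩ := by rw [Equiv.symm_apply_eq]; exact h.symm
      have hq2 : q = s := by rw [hqdef, this]
      exact hsq hq2.symm
    have h2 : σ ⟨s, hs⟩ ≠ k := by
      intro h
      have : σ.symm k = ⟨s, hs⟩ := by rw [Equiv.symm_apply_eq]; exact h.symm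
      exact absurd (by rw [hqkdef, this] : qk = s) (by omega)
    rw [hτ_apply, Equiv.swap_apply_of_ne_of_ne h1 h2]
  have hA : availAux n p σ q = availAux n p τ q :=
    availAux_congr n p σ τ q (fun s hs hsq => hagents s hs (by omega) (by omega))
  -- the pick of i in σ
  have hfmem : sdPick n p σ i ∈ availAux n p σ q := sdPick_mem n p σ i
  -- the pick of k in τ (τ puts k at position q)
  have hvmem : sdPick n p τ k ∈ availAux n p σ q := by
    have := sdPick_mem n p τ k
    rw [hτsymm_k, ← hqdef, ← hA] at this
    exact this
  by_cases hc : sdPick n p τ k = sdPick n p σ i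
  · -- same object picked first; availability thereafter identical
    have h1 : availAux n p σ (q + 1) = availAux n p τ (q + 1) := by
      have e1 : availAux n p σ (q + 1) =
          (availAux n p σ q).erase (sdPick n p σ i) := availAux_erase_pick n p σ i
      have e2 : availAux n p τ ((τ.symm k).val + 1) =
          (availAux n p τ (τ.symm k).val).erase (sdPick n p τ k) := availAux_erase_pick n p τ k
      rw [hτsymm_k, ← hqdef] at e2
      rw [e1, e2, hc, hA]
    have h2 : availAux n p σ qk = availAux n p τ qk :=
      availAux_congr_from n p σ τ h1 qk (by omega)
        (fun s hs h1' h2' => hagents s hs (by omega) h2')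
    -- compare i's pick in τ with k's pick in σ (both at position qk)
    have humem : sdPick n p σ k ∈ availAux n p τ (τ.symm i).val := by
      rw [hτsymm_i, ← hqkdef, ← h2]
      exact sdPick_mem n p σ k
    have hxu : p i (sdPick n p τ i) ≤ p i (sdPick n p σ k) :=
      sdPick_min n p τ i _ humem
    have hpow : M ^ (n - 1 - (p i (sdPick n p σ k)).val) ≤
        M ^ (n - 1 - (p i (sdPick n p τ i)).val) := by
      refine Nat.pow_le_pow_right (by omega) ?_
      have := Fin.le_def.mp hxu
      omega
    rw [hc, Nat.add_comm]
    exact Nat.add_le_add le_rfl hpow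
  · -- different object: both of k's picks are strictly worse than f for i
    have hfv : p i (sdPick n p σ i) < p i (sdPick n p τ k) :=
      sdPick_lt n p σ i _ hvmem hc
    have humem : sdPick n p σ k ∈ (availAux n p σ q).erase (sdPick n p σ i) := by
      rw [← availAux_erase_pick n p σ i]
      exact availAux_subset n p σ (by omega : q + 1 ≤ qk) (sdPick_mem n p σ k)
    have hfu : p i (sdPick n p σ i) < p i (sdPick n p σ k) :=
      sdPick_lt n p σ i _ (Finset.mem_of_mem_erase humem)
        (Finset.ne_of_mem_erase humem)
    set t := (p i (sdPick n p σ i)).val with htdef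
    have htu : t < (p i (sdPick n p σ k)).val := Fin.lt_def.mp hfu
    have htv : t < (p i (sdPick n p τ k)).val := Fin.lt_def.mp hfv
    have hub : (p i (sdPick n p σ k)).val < n := (p i (sdPick n p σ k)).isLt
    have hwu : M ^ (n - 1 - (p i (sdPick n p σ k)).val) ≤ M ^ (n - 2 - t) :=
      Nat.pow_le_pow_right (by omega) (by omega)
    have hwv : M ^ (n - 1 - (p i (sdPick n p τ k)).val) ≤ M ^ (n - 2 - t) :=
      Nat.pow_le_pow_right (by omega) (by omega)
    have hwf : M ^ (n - 2 - t) * 2 ≤ M ^ (n - 1 - t) := by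
      have he : n - 1 - t = (n - 2 - t) + 1 := by omega
      rw [he, pow_succ]
      exact Nat.mul_le_mul_left _ hM
    calc M ^ (n - 1 - (p i (sdPick n p σ k)).val) +
          M ^ (n - 1 - (p i (sdPick n p τ k)).val)
        ≤ M ^ (n - 2 - t) + M ^ (n - 2 - t) := Nat.add_le_add hwu hwv
      _ = M ^ (n - 2 - t) * 2 := by ring
      _ ≤ M ^ (n - 1 - t) := hwf
      _ ≤ M ^ (n - 1 - t) + M ^ (n - 1 - (p i (sdPick n p τ i)).val) := Nat.le_add_right _ _

lemma sum_w_le (n : ℕ) (p : Fin n → Equiv.Perm (Fin n)) (M : ℕ) (hM : 2 ≤ M)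
    (i k : Fin n) (hik : i ≠ k) :
    ∑ σ : Equiv.Perm (Fin n), M ^ (n - 1 - (p i (sdPick n p σ k)).val) ≤
      ∑ σ : Equiv.Perm (Fin n), M ^ (n - 1 - (p i (sdPick n p σ i)).val) := by
  set f : Equiv.Perm (Fin n) → Fin n → ℕ :=
    fun σ a => M ^ (n - 1 - (p i (sdPick n p σ a)).val) with hf
  have hswap : ∀ σ : Equiv.Perm (Fin n),
      Equiv.swap i k * (Equiv.swap i k * σ) = σ := by
    intro σ; rw [← mul_assoc, Equiv.swap_mul_self, one_mul]
  have hstep : ∀ σ : Equiv.Perm (Fin n),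
      f σ k + f (Equiv.swap i k * σ) k ≤ f σ i + f (Equiv.swap i k * σ) i := by
    intro σ
    rcases lt_trichotomy (σ.symm i).val (σ.symm k).val with h | h | h
    · exact key_pair n p M hM i k σ h
    · exact absurd (σ.symm.injective (Fin.ext h)) hik
    · have hτ : ((Equiv.swap i k * σ).symm i).val < ((Equiv.swap i k * σ).symm k).val := by
        have h1 : (Equiv.swap i k * σ) (σ.symm k) = i := by
          show Equiv.swap i k (σ (σ.symm k)) = i
          rw [Equiv.apply_symm_apply, Equiv.swap_apply_right]
        have h2 : (Equiv.swap i k * σ) (σ.symm i) = k := by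
          show Equiv.swap i k (σ (σ.symm i)) = k
          rw [Equiv.apply_symm_apply, Equiv.swap_apply_left]
        have e1 : (Equiv.swap i k * σ).symm i = σ.symm k := by
          rw [Equiv.symm_apply_eq]; exact h1.symm
        have e2 : (Equiv.swap i k * σ).symm k = σ.symm i := by
          rw [Equiv.symm_apply_eq]; exact h2.symm
        rw [e1, e2]; exact h
      have := key_pair n p M hM i k (Equiv.swap i k * σ) hτ
      rw [hswap σ] at this
      simp only [hf]
      omega
  have hre : ∀ a : Fin n, ∑ σ : Equiv.Perm (Fin n), f (Equiv.swap i k * σ) a =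
      ∑ σ : Equiv.Perm (Fin n), f σ a := by
    intro a
    exact Equiv.sum_comp (Equiv.mulLeft (Equiv.swap i k)) (fun σ => f σ a)
  have h2 : ∑ σ : Equiv.Perm (Fin n), (f σ k + f (Equiv.swap i k * σ) k) ≤
      ∑ σ : Equiv.Perm (Fin n), (f σ i + f (Equiv.swap i k * σ) i) :=
    Finset.sum_le_sum (fun σ _ => hstep σ)
  rw [Finset.sum_add_distrib, Finset.sum_add_distrib, hre k, hre i] at h2
  simp only [hf] at h2
  omega

lemma sum_comp_eq (n : ℕ) (p : Fin n → Equiv.Perm (Fin n)) (a : Fin n) (w : Fin n → ℕ) :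
    ∑ σ : Equiv.Perm (Fin n), w (sdPick n p σ a) =
      ∑ j : Fin n, (Finset.univ.filter (fun σ => sdPick n p σ a = j)).card * w j := by
  rw [← Finset.sum_fiberwise Finset.univ (fun σ => sdPick n p σ a)
    (fun σ => w (sdPick n p σ a))]
  refine Finset.sum_congr rfl (fun j _ => ?_)
  rw [Finset.sum_congr rfl (fun σ hσ => by rw [(Finset.mem_filter.mp hσ).2] :
    ∀ σ ∈ Finset.univ.filter (fun σ => sdPick n p σ a = j),
      w (sdPick n p σ a) = w j), Finset.sum_const, smul_eq_mul]

lemma rsd_eq_card (n : ℕ) (p : Fin n → Equiv.Perm (Fin n)) (a j : Fin n) :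
    rsd n p a j =
      ((Finset.univ.filter (fun σ => sdPick n p σ a = j)).card : ℚ) / (Nat.factorial n) := by
  rw [rsd]
  congr 1
  exact Finset.sum_boole _ _

/-- with `n = m`, RSD is ld-envyfree: no agent `i` ld-envies another agent
`k`, i.e. there is no object `ℓ` with `RSD_{k,ℓ} > RSD_{i,ℓ}` while the allocations agree
on every object `i` strictly prefers to `ℓ`. -/
theorem rsd_ldEnvyfree (n : ℕ) (p : Fin n → Equiv.Perm (Fin n)) :
    ¬ ∃ (i k ℓ : Fin n), rsd n p k ℓ > rsd n p i ℓ ∧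
      ∀ j, p i j < p i ℓ → rsd n p i j = rsd n p k j := by
  rintro ⟨i, k, ℓ, hgt, heq⟩
  have hn : 0 < n := i.pos
  have hF : 0 < Nat.factorial n := Nat.factorial_pos n
  have hFQ : (0:ℚ) < (Nat.factorial n : ℚ) := by exact_mod_cast hF
  set C : Fin n → Fin n → ℕ :=
    fun a j => (Finset.univ.filter (fun σ => sdPick n p σ a = j)).card with hC
  have hgt' : C i ℓ < C k ℓ := by
    rw [gt_iff_lt, rsd_eq_card, rsd_eq_card, div_lt_div_iff_of_pos_right hFQ,
      Nat.cast_lt] at hgt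
    exact hgt
  have hik : i ≠ k := by rintro rfl; exact lt_irrefl _ hgt'
  have heq' : ∀ j, p i j < p i ℓ → C i j = C k j := by
    intro j hj
    have h2 := heq j hj
    rw [rsd_eq_card, rsd_eq_card, div_left_inj' (ne_of_gt hFQ)] at h2
    exact_mod_cast h2
  set M : ℕ := n * Nat.factorial n + 1 with hMdef
  have hM2 : 2 ≤ M := by
    have : 1 ≤ n * Nat.factorial n := Nat.mul_pos hn hF
    omega
  set w : Fin n → ℕ := fun j => M ^ (n - 1 - (p i j).val) with hw
  have hsum : ∑ j : Fin n, C k j * w j ≤ ∑ j : Fin n, C i j * w j := by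
    rw [← sum_comp_eq, ← sum_comp_eq]
    exact sum_w_le n p M hM2 i k hik
  -- split the sums into B (strictly preferred to ℓ), ℓ itself, and R (worse than ℓ)
  set B : Finset (Fin n) := Finset.univ.filter (fun j => p i j < p i ℓ) with hB
  set R : Finset (Fin n) := Finset.univ.filter (fun j => p i ℓ < p i j) with hR
  have hlR : ℓ ∉ R := by simp [hR]
  have hsplit : ∀ g : Fin n → ℕ,
      ∑ j : Fin n, g j = (∑ j ∈ B, g j) + (g ℓ + ∑ j ∈ R, g j) := by
    intro g
    rw [← Finset.sum_filter_add_sum_filter_not Finset.univ (fun j => p i j < p i ℓ) g]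
    congr 1
    have hins : Finset.univ.filter (fun j => ¬ p i j < p i ℓ) = insert ℓ R := by
      ext j
      simp only [Finset.mem_filter, Finset.mem_univ, true_and, Finset.mem_insert,
        not_lt, hR]
      constructor
      · intro h
        rcases eq_or_lt_of_le h with h1 | h1
        · exact Or.inl ((p i).injective h1.symm)
        · exact Or.inr h1
      · rintro (rfl | h)
        · exact le_rfl
        · exact h.le
    rw [hins, Finset.sum_insert hlR]
  rw [hsplit, hsplit] at hsum
  have hBeq : ∑ j ∈ B, C k j * w j = ∑ j ∈ B, C i j * w j :=
    Finset.sum_congr rfl (fun j hj => by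
      rw [heq' j (Finset.mem_filter.mp hj).2])
  rw [hBeq] at hsum
  have hsum2 : C k ℓ * w ℓ + ∑ j ∈ R, C k j * w j ≤
      C i ℓ * w ℓ + ∑ j ∈ R, C i j * w j := by omega
  have hmul : (C i ℓ + 1) * w ℓ ≤ C k ℓ * w ℓ :=
    Nat.mul_le_mul_right _ hgt'
  rw [add_mul, one_mul] at hmul
  have hwX : w ℓ ≤ ∑ j ∈ R, C i j * w j := by omega
  -- bound the R sum
  set t0 : ℕ := (p i ℓ).val with ht0
  have hcard : ∀ j, C i j ≤ Nat.factorial n := by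
    intro j
    calc C i j ≤ (Finset.univ : Finset (Equiv.Perm (Fin n))).card := Finset.card_filter_le _ _
      _ = Nat.factorial n := by
        rw [Finset.card_univ, Fintype.card_perm, Fintype.card_fin]
  have hRbound : ∑ j ∈ R, C i j * w j ≤ n * (Nat.factorial n * M ^ (n - 2 - t0)) := by
    calc ∑ j ∈ R, C i j * w j ≤ ∑ _j ∈ R, Nat.factorial n * M ^ (n - 2 - t0) := by
          refine Finset.sum_le_sum (fun j hj => ?_)
          have hjR : p i ℓ < p i j := (Finset.mem_filter.mp hj).2
          have hjv : t0 < (p i j).val := Fin.lt_def.mp hjR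
          refine Nat.mul_le_mul (hcard j) ?_
          refine Nat.pow_le_pow_right (by omega) (by omega)
      _ = R.card * (Nat.factorial n * M ^ (n - 2 - t0)) := by
          rw [Finset.sum_const, smul_eq_mul]
      _ ≤ n * (Nat.factorial n * M ^ (n - 2 - t0)) := by
          refine Nat.mul_le_mul_right _ ?_
          calc R.card ≤ (Finset.univ : Finset (Fin n)).card := Finset.card_filter_le _ _
            _ = n := by rw [Finset.card_univ, Fintype.card_fin]
  rcases R.eq_empty_or_nonempty with hRe | ⟨j0, hj0⟩
  · rw [hRe, Finset.sum_empty] at hwX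
    have : 0 < w ℓ := Nat.pow_pos (by omega)
    omega
  · have hj0R : p i ℓ < p i j0 := (Finset.mem_filter.mp hj0).2
    have hj0v : t0 < (p i j0).val := Fin.lt_def.mp hj0R
    have hj0n : (p i j0).val < n := (p i j0).isLt
    have ht0n : t0 + 2 ≤ n := by omega
    have hwl : w ℓ = M ^ (n - 2 - t0) * M := by
      have he : n - 1 - t0 = (n - 2 - t0) + 1 := by omega
      rw [hw]
      simp only []
      rw [← ht0, he, pow_succ]
    have hfin : n * (Nat.factorial n * M ^ (n - 2 - t0)) < w ℓ := by
      rw [hwl]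
      have hpos : 0 < M ^ (n - 2 - t0) := Nat.pow_pos (by omega)
      calc n * (Nat.factorial n * M ^ (n - 2 - t0))
          = (n * Nat.factorial n) * M ^ (n - 2 - t0) := by ring
        _ < M * M ^ (n - 2 - t0) := by
            exact (Nat.mul_lt_mul_right hpos).mpr (by omega)
        _ = M ^ (n - 2 - t0) * M := by ring
    omega
end

section
/- For the preference profile ((abcd),(abcd),(badc),(badc)), the assignment A where agents 1,2 each receive (1/2, 0, 1/2, 0) over (a,b,c,d) and agents 3,4 each receive (0, 1/2, 0, 1/2) stochastically dominates the RSD assignment for every agent; hence RSD is not sd-efficient at this profile. -/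
open Finset

/-- The preference profile `((abcd),(abcd),(badc),(badc))` as rank permutations. -/
def p9 : Fin 4 → Equiv.Perm (Fin 4) :=
  ![1, 1, (Equiv.swap 0 1).trans (Equiv.swap 2 3), (Equiv.swap 0 1).trans (Equiv.swap 2 3)]

/-- The PS assignment: agents 1,2 get `(1/2,0,1/2,0)`, agents 3,4 get `(0,1/2,0,1/2)`. -/
def A9 : Fin 4 → Fin 4 → ℚ :=
  ![![1/2, 0, 1/2, 0], ![1/2, 0, 1/2, 0], ![0, 1/2, 0, 1/2], ![0, 1/2, 0, 1/2]]

/-- Upper cumulative sum `w(≻_i, ℓ, X)` of allocation `X` w.r.t. agent `i`'s ranking. -/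
def w9 (i : Fin 4) (X : Fin 4 → ℚ) (ℓ : Fin 4) : ℚ :=
  ∑ j ∈ Finset.univ.filter (fun j => p9 i j ≤ p9 i ℓ), X j


def cnt9 (i j : Fin 4) : ℕ :=
  (Finset.univ.filter fun σ : Equiv.Perm (Fin 4) => sdPick 4 p9 σ i = j).card

lemma rsd_eq_cnt (i j : Fin 4) : rsd 4 p9 i j = (cnt9 i j : ℚ) / 24 := by
  rw [rsd, Finset.sum_boole, cnt9]
  norm_num [Nat.factorial]

lemma cnt9_eq : cnt9 = fun i j =>
    (![![10, 2, 10, 2], ![10, 2, 10, 2], ![2, 10, 2, 10], ![2, 10, 2, 10]] : Fin 4 → Fin 4 → ℕ) i j := by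
  funext i j
  fin_cases i <;> fin_cases j <;> decide

lemma rsd_vals (i j : Fin 4) : rsd 4 p9 i j =
    (![![5/12, 1/12, 5/12, 1/12], ![5/12, 1/12, 5/12, 1/12],
       ![1/12, 5/12, 1/12, 5/12], ![1/12, 5/12, 1/12, 5/12]] : Fin 4 → Fin 4 → ℚ) i j := by
  rw [rsd_eq_cnt, cnt9_eq]
  fin_cases i <;> fin_cases j <;> norm_num

/-- the assignment `A9` stochastically dominates the RSD assignment for every
agent; hence RSD is not sd-efficient at this profile (some feasible assignment
sd-dominates it for all agents). -/
theorem rsd_not_sd_efficient :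
    (∀ i : Fin 4, A9 i ≠ (fun j => rsd 4 p9 i j) ∧
      ∀ ℓ, w9 i (A9 i) ℓ ≥ w9 i (fun j => rsd 4 p9 i j) ℓ) ∧
    ∃ B : Fin 4 → Fin 4 → ℚ,
      (∀ i, (∀ j, 0 ≤ B i j) ∧ ∑ j, B i j = 1) ∧
      ∀ i, B i ≠ (fun j => rsd 4 p9 i j) ∧
        ∀ ℓ, w9 i (B i) ℓ ≥ w9 i (fun j => rsd 4 p9 i j) ℓ := by
  have key : ∀ i : Fin 4, (A9 i ≠ fun j => rsd 4 p9 i j) ∧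
      ∀ ℓ, w9 i (A9 i) ℓ ≥ w9 i (fun j => rsd 4 p9 i j) ℓ := by
    intro i
    constructor
    · intro h
      have h0 := congrFun h 0
      rw [rsd_vals] at h0
      fin_cases i <;> norm_num [A9] at h0
    · intro ℓ
      have hp : ∀ a b : Fin 4, p9 a b =
          (![![0,1,2,3],![0,1,2,3],![1,0,3,2],![1,0,3,2]] : Fin 4 → Fin 4 → Fin 4) a b := by
        decide
      simp only [w9, rsd_vals, hp, Finset.sum_filter, Fin.sum_univ_four]
      fin_cases i <;> fin_cases ℓ <;> norm_num [A9, Matrix.cons_val_two, Matrix.cons_val_three, Fin.ext_iff, Fin.le_def, show ((3:Fin 4):ℕ) = 3 from rfl]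
  refine ⟨key, A9, fun i => ⟨fun j => ?_, ?_⟩, key⟩
  · fin_cases i <;> fin_cases j <;> norm_num [A9]
  · fin_cases i <;> norm_num [A9, Fin.sum_univ_four, Matrix.cons_val_two, Matrix.cons_val_three]
end

section
/- For two agents and four objects with true preferences agent 1: a≻b≻c≻d and agent 2: b≻c≻a≻d, agent 1's PS allocation under the misreport b≻a≻c≻d, namely (1, 1/2, 0, 1/2) on (a,b,c,d), stochastically dominates her truthful PS allocation (1, 0, 1/2, 1/2) with respect to her true preference; hence PS with n < m is sd-manipulable (not weakly sd-strategyproof). -/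
open Finset

/-- Agent 1's true ranking over `(a,b,c,d) = (0,1,2,3)`: `a ≻ b ≻ c ≻ d` (identity). -/
def rank12 : Fin 4 → Fin 4 := id

/-- Agent 1's truthful PS allocation under reports `((abcd),(bcad))`. -/
def Atruth : Fin 4 → ℚ := ![1, 0, 1/2, 1/2]

/-- Agent 1's PS allocation under the misreport `(bacd)` against `(bcad)`. -/
def Amis : Fin 4 → ℚ := ![1, 1/2, 0, 1/2]

/-- Upper cumulative sum w.r.t. agent 1's true preference. -/
def w12 (X : Fin 4 → ℚ) (ℓ : Fin 4) : ℚ :=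
  ∑ j ∈ Finset.univ.filter (fun j => rank12 j ≤ rank12 ℓ), X j

/-- agent 1's PS allocation under the misreport stochastically dominates
her truthful PS allocation with respect to her true preference `a ≻ b ≻ c ≻ d`;
hence PS with `n < m` is sd-manipulable. -/
theorem ps_sd_manipulable :
    Amis ≠ Atruth ∧ (∀ ℓ, w12 Amis ℓ ≥ w12 Atruth ℓ) ∧ ∃ ℓ, w12 Amis ℓ > w12 Atruth ℓ := by
  refine ⟨?_, fun ℓ => ?_, ⟨1, ?_⟩⟩
  · intro h
    have := congrFun h 1
    simp [Amis, Atruth] at this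
  · fin_cases ℓ <;>
      (simp only [w12, Finset.sum_filter]
       simp [w12, rank12, Atruth, Amis, Finset.sum_filter, Fin.sum_univ_four])
  · simp only [w12, Finset.sum_filter]
    simp [w12, rank12, Atruth, Amis, Finset.sum_filter, Fin.sum_univ_four]
end
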